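/- Let L be a Lindbladian with dual L†(X) = i[H,X] − ½{Φ(𝟙), X} + Φ(X) on a finite-dimensional Hilbert space, and let ρ > 0 be a density matrix with L(ρ) = 0. If Φ is ρ-self-adjoint (i.e., Φ†(Aρ)ρ⁻¹ = Φ(A) for all A) and [Φ, Δ_ρ] = 0 with Δ_ρ(X) = ρXρ⁻¹, then [H, ρ] = 0. -/
import Mathlib


open Matrix
open scoped ComplexOrder

/-- if `ρ > 0` is a steady state of the Lindbladian
`L(σ) = −i[H,σ] + Σ_l (Γ_l σ Γ_l* − ½{Γ_l*Γ_l, σ})`, the associated CP map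
`Φ(X) = Σ_l Γ_l* X Γ_l` is `ρ`-self-adjoint (`Φ†(Aρ)ρ⁻¹ = Φ(A)` where
`Φ†(σ) = Σ_l Γ_l σ Γ_l*` is its trace dual), and `[Φ, Δ_ρ] = 0`, then `[H, ρ] = 0`. -/
theorem stmt5 {n : ℕ} {ι : Type*} [Fintype ι]
    (H : Matrix (Fin n) (Fin n) ℂ) (hH : Hᴴ = H)
    (Γ : ι → Matrix (Fin n) (Fin n) ℂ)
    (Φ Φd L : Matrix (Fin n) (Fin n) ℂ → Matrix (Fin n) (Fin n) ℂ)
    (hΦ : ∀ X, Φ X = ∑ l, (Γ l)ᴴ * X * Γ l)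
    (hΦd : ∀ X, Φd X = ∑ l, Γ l * X * (Γ l)ᴴ)
    (hL : ∀ σ, L σ = -(Complex.I • (H * σ - σ * H)) + Φd σ
        - (1/2 : ℂ) • (Φ 1 * σ + σ * Φ 1))
    (ρ : Matrix (Fin n) (Fin n) ℂ) (hρ : ρ.PosDef) (hρtr : ρ.trace = 1)
    (hsteady : L ρ = 0)
    (hsa : ∀ A, Φd (A * ρ) * ρ⁻¹ = Φ A)
    (hcomm : ∀ X, Φ (ρ * X * ρ⁻¹) = ρ * Φ X * ρ⁻¹) :
    H * ρ = ρ * H := by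
  have hdet : IsUnit ρ.det := isUnit_iff_ne_zero.mpr (ne_of_gt hρ.det_pos)
  have hinv : ρ * ρ⁻¹ = 1 := mul_nonsing_inv ρ hdet
  have hinv' : ρ⁻¹ * ρ = 1 := nonsing_inv_mul ρ hdet
  -- Φ 1 commutes with ρ
  have hK : Φ 1 * ρ = ρ * Φ 1 := by
    have h := hcomm 1
    rw [mul_one, hinv] at h
    calc Φ 1 * ρ = ρ * Φ 1 * ρ⁻¹ * ρ := by rw [← h]
    _ = ρ * Φ 1 := by rw [mul_assoc, hinv', mul_one]
  -- Φd ρ = Φ 1 * ρ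
  have hD : Φd ρ = Φ 1 * ρ := by
    have h := hsa 1
    rw [one_mul] at h
    calc Φd ρ = Φd ρ * ρ⁻¹ * ρ := by rw [mul_assoc, hinv', mul_one]
    _ = Φ 1 * ρ := by rw [h]
  have h := hsteady
  rw [hL ρ, hD, ← hK] at h
  have h2 : -(Complex.I • (H * ρ - ρ * H)) = 0 := by
    have : (1/2 : ℂ) • (Φ 1 * ρ + Φ 1 * ρ) = Φ 1 * ρ := by
      rw [← two_smul ℂ, smul_smul]; norm_num
    rw [this] at h
    linear_combination (norm := abel_nf) h
  have h3 : H * ρ - ρ * H = 0 := by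
    have := neg_eq_zero.mp h2
    rcases smul_eq_zero.mp this with h | h
    · exact absurd h Complex.I_ne_zero
    · exact h
  exact sub_eq_zero.mp h3
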